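/- For every integer k ≥ 2 there exist a unimodular lattice Λ = Aℤ^k in ℝ^k and a constant c ∈ (0,1] such that every nonzero point (λ₁,…,λ_k) of the dual lattice Λ* = (A^{−1})ᵀℤ^k satisfies |λ₁·λ₂⋯λ_k| ≥ c. In particular, writing λ = (λ₁,…,λ_{k−1}), every nonzero (λ,λ_k) ∈ Λ* satisfies H(λ)·|λ_k| ≥ c, so the dual multiplicative lower bound H(λ)·|λ_k| > 1/φ(H(λ)) holds with the constant function φ ≡ 2/c. (Such a lattice arises, after rescaling, from the Minkowski embedding of the ring of integers of a totally real number field of degree k, on which the field norm is a nonzero integer.) -/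

import Mathlib

open scoped BigOperators

/-- The Fourier transform `∫ w(x) e^{-2πiξx} dx` of a real weight function. -/
noncomputable def fhat (w : ℝ → ℝ) (ξ : ℝ) : ℂ :=
  ∫ x : ℝ, (w x : ℂ) * Complex.exp (-(2 * Real.pi * Complex.I * ξ * x))

/-- The class 𝒢_{k,ℓ} of good weight tuples. -/
def GoodWeights (k ℓ : ℕ) (w : Fin k → ℝ → ℝ) : Prop :=
  ∀ i : Fin k,
    (∀ x, 0 ≤ w i x) ∧
    (Function.support (w i) ⊆ Set.Icc (-2 : ℝ) 2) ∧
    ContDiff ℝ ℓ (w i) ∧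
    (∀ ξ : ℝ, (fhat (w i) ξ).im = 0 ∧ 0 ≤ (fhat (w i) ξ).re) ∧
    0 < (fhat (w i) 0).re

/-- Multiplicative height `H(m) = ∏ max(1,|mᵢ|)`. -/
noncomputable def Hmul {d : ℕ} (m : Fin d → ℝ) : ℝ := ∏ i, max 1 |m i|

/-- Distance from `x` to the nearest integer. -/
noncomputable def distInt (x : ℝ) : ℝ := |x - (round x : ℝ)|

/-- The constant 𝔠(ω) = ω̂₁(0)⋯ω̂_k(0). -/
noncomputable def smoothC {k : ℕ} (w : Fin k → ℝ → ℝ) : ℝ := ∏ i, (fhat (w i) 0).re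

/-- Smooth discrepancy of the Kronecker sequence of α in the box (γ; ρ) at scale N. -/
noncomputable def Dbox (d : ℕ) (w : Fin (d+1) → ℝ → ℝ) (α γ ρ : Fin d → ℝ) (N : ℝ) : ℝ :=
  (∑' p : (Fin d → ℤ) × ℤ,
      w (Fin.last d) ((p.2 : ℝ) / N) *
        ∏ i : Fin d, w i.castSucc (((p.1 i : ℝ) + (p.2 : ℝ) * α i - γ i) / ρ i))
    - smoothC w * ((∏ i, ρ i) * N)

/-- The point of the lattice `A ℤ^k` indexed by the integer vector `a`. -/
noncomputable def latPt {k : ℕ} (A : Matrix (Fin k) (Fin k) ℝ) (a : Fin k → ℤ) : Fin k → ℝ :=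
  A.mulVec (fun i => (a i : ℝ))

/-- The point of the dual lattice `(A⁻¹)ᵀ ℤ^k` indexed by the integer vector `a`. -/
noncomputable def dualPt {k : ℕ} (A : Matrix (Fin k) (Fin k) ℝ) (a : Fin k → ℤ) : Fin k → ℝ :=
  (A⁻¹).transpose.mulVec (fun i => (a i : ℝ))

/-- Smooth lattice discrepancy of the lattice `A ℤ^{d+1}` in the box (γ; ρ) at scale N. -/
noncomputable def DboxLat (d : ℕ) (A : Matrix (Fin (d+1)) (Fin (d+1)) ℝ)
    (w : Fin (d+1) → ℝ → ℝ) (γ ρ : Fin d → ℝ) (N : ℝ) : ℝ :=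
  (∑' a : Fin (d+1) → ℤ,
      w (Fin.last d) (latPt A a (Fin.last d) / N) *
        ∏ i : Fin d, w i.castSucc ((latPt A a i.castSucc - γ i) / ρ i))
    - smoothC w * ((∏ i, ρ i) * N)

/-- Side-length vector of a test box: each ρᵢ ∈ (0, 1/2). -/
def IsBox {d : ℕ} (ρ : Fin d → ℝ) : Prop := ∀ i, 0 < ρ i ∧ ρ i < 1/2

/-- Every nonzero dual lattice point (λ, λ_k) satisfies H(λ)·|λ_k| > 1/φ(H(λ)). -/
def DualBad (d : ℕ) (A : Matrix (Fin (d+1)) (Fin (d+1)) ℝ) (φ : ℝ → ℝ) : Prop :=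
  ∀ a : Fin (d+1) → ℤ, dualPt A a ≠ 0 →
    Hmul (fun i : Fin d => dualPt A a i.castSucc) * |dualPt A a (Fin.last d)| >
      1 / φ (Hmul (fun i : Fin d => dualPt A a i.castSucc))

section AuxUnimodular

open Polynomial

noncomputable def gP (k : ℕ) : ℤ[X] := ∏ i ∈ Finset.range k, (X - C (4 * (i:ℤ)))
noncomputable def fP (k : ℕ) : ℤ[X] := gP k - C 2

lemma gP_monic (k : ℕ) : (gP k).Monic :=
  monic_prod_of_monic _ _ fun _ _ => monic_X_sub_C _

lemma gP_natDegree (k : ℕ) : (gP k).natDegree = k := by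
  rw [gP, natDegree_prod _ _ fun i _ => X_sub_C_ne_zero _]
  simp only [natDegree_X_sub_C]
  simp

lemma gP_degree (k : ℕ) : (gP k).degree = k := by
  rw [degree_eq_natDegree (gP_monic k).ne_zero, gP_natDegree]

lemma degC_lt {k : ℕ} (hk : 0 < k) : degree (-C (2:ℤ)) < degree (gP k) := by
  rw [gP_degree]
  exact lt_of_le_of_lt (degree_neg (C (2:ℤ)) ▸ degree_C_le) (by exact_mod_cast WithBot.coe_lt_coe.mpr hk)

lemma fP_monic {k : ℕ} (hk : 0 < k) : (fP k).Monic := by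
  rw [fP, sub_eq_add_neg]
  exact (gP_monic k).add_of_left (degC_lt hk)

lemma fP_natDegree {k : ℕ} (hk : 0 < k) : (fP k).natDegree = k := by
  rw [fP, natDegree_sub_C, gP_natDegree]

lemma fP_degree {k : ℕ} (hk : 0 < k) : (fP k).degree = k := by
  rw [degree_eq_natDegree (fP_monic hk).ne_zero, fP_natDegree hk]

lemma gP_coeff_mod4 {k : ℕ} {n : ℕ} (hn : n < k) : (4:ℤ) ∣ (gP k).coeff n := by
  have hmap : (gP k).map (Int.castRingHom (ZMod 4)) = X ^ k := by
    rw [gP, Polynomial.map_prod]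
    rw [show (X:(ZMod 4)[X]) ^ k = ∏ i ∈ Finset.range k, X by simp]
    refine Finset.prod_congr rfl fun i _ => ?_
    have h4 : ((4 * (i:ℤ) : ℤ) : ZMod 4) = 0 :=
      (ZMod.intCast_zmod_eq_zero_iff_dvd _ 4).mpr ⟨i, rfl⟩
    simp [Polynomial.map_sub, h4]
    have h40 : (4 : (ZMod 4)[X]) = 0 := by
      rw [← map_ofNat (Polynomial.C : ZMod 4 →+* (ZMod 4)[X]) 4,
        show (4 : ZMod 4) = 0 by decide, map_zero]
    rw [h40, zero_mul]
  have := congrArg (fun p => Polynomial.coeff p n) hmap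
  simp only [coeff_map, coeff_X_pow, if_neg (Nat.ne_of_lt hn)] at this
  exact_mod_cast (ZMod.intCast_zmod_eq_zero_iff_dvd _ 4).mp this

lemma fP_coeff_mem {k n : ℕ} (hn : n < k) : (fP k).coeff n ∈ Ideal.span {(2:ℤ)} := by
  rw [Ideal.mem_span_singleton, fP, coeff_sub, coeff_C]
  rcases gP_coeff_mod4 hn with ⟨m, hm⟩
  by_cases h0 : n = 0
  · subst h0; simp only [if_pos rfl, hm]; exact ⟨2 * m - 1, by simp; ring⟩
  · simp only [if_neg h0, sub_zero, hm]; exact ⟨2 * m, by ring⟩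

lemma fP_coeff_zero_not_mem {k : ℕ} (hk : 0 < k) :
    (fP k).coeff 0 ∉ Ideal.span {(2:ℤ)} ^ 2 := by
  rw [Ideal.span_singleton_pow, Ideal.mem_span_singleton]
  rcases gP_coeff_mod4 hk with ⟨m, hm⟩
  rw [fP, coeff_sub, coeff_C, if_pos rfl, hm]
  intro ⟨c, hc⟩
  omega

lemma fP_irreducible {k : ℕ} (hk : 0 < k) : Irreducible (fP k) := by
  refine Polynomial.irreducible_of_eisenstein_criterion
    (Ideal.span_singleton_prime (by norm_num)|>.mpr Int.prime_two) ?_ ?_ ?_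
    (fP_coeff_zero_not_mem hk) ((fP_monic hk).isPrimitive)
  · rw [(fP_monic hk).leadingCoeff, Ideal.mem_span_singleton]
    norm_num
  · intro n hdeg
    refine fP_coeff_mem ?_
    rw [fP_degree hk] at hdeg
    exact_mod_cast hdeg
  · rw [fP_degree hk]
    exact_mod_cast hk

lemma fPQ_irreducible {k : ℕ} (hk : 0 < k) :
    Irreducible ((fP k).map (Int.castRingHom ℚ)) := by
  have := ((fP_monic hk).irreducible_iff_irreducible_map_fraction_map (K := ℚ)).mp
    (fP_irreducible hk)
  convert this using 2 <;> rfl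

noncomputable def Ff (k : ℕ) (x : ℝ) : ℝ := (∏ i ∈ Finset.range k, (x - 4*i)) - 2

lemma Ff_eval {k : ℕ} (x : ℝ) : ((fP k).map (Int.castRingHom ℝ)).eval x = Ff k x := by
  rw [fP, Polynomial.map_sub, gP, Polynomial.map_prod, Ff]
  simp [eval_prod]

lemma Ff_cont (k : ℕ) : Continuous (Ff k) := by
  unfold Ff
  exact (continuous_finset_prod _ fun i _ => by continuity).sub continuous_const

lemma prod_sign_bound {k j : ℕ} (hj : j ≤ k) :
    (2:ℝ)^k ≤ (-1)^(k-j) * ∏ i ∈ Finset.range k, ((4*j - 2 : ℝ) - 4*i) := by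
  rw [← Finset.prod_range_mul_prod_Ico _ hj]
  have hcard : (Finset.Ico j k).card = k - j := Nat.card_Ico j k
  have hneg : (-1:ℝ)^(k-j) * ∏ i ∈ Finset.Ico j k, ((4*j - 2 : ℝ) - 4*i)
      = ∏ i ∈ Finset.Ico j k, (4*(i:ℝ) + 2 - 4*j) := by
    rw [show (∏ i ∈ Finset.Ico j k, (4*(i:ℝ) + 2 - 4*j))
        = ∏ i ∈ Finset.Ico j k, (-1) * ((4*j - 2 : ℝ) - 4*i) by
      refine Finset.prod_congr rfl fun i _ => by ring]
    rw [Finset.prod_mul_distrib, Finset.prod_const, hcard]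
  calc (2:ℝ)^k = 2^j * 2^(k-j) := by rw [← pow_add]; congr 1; omega
    _ ≤ (∏ i ∈ Finset.range j, ((4*j - 2 : ℝ) - 4*i)) *
          ∏ i ∈ Finset.Ico j k, (4*(i:ℝ) + 2 - 4*j) := by
        apply mul_le_mul
        · rw [show (2:ℝ)^j = ∏ _i ∈ Finset.range j, (2:ℝ) by simp]
          apply Finset.prod_le_prod (fun i _ => by norm_num)
          intro i hi
          rw [Finset.mem_range] at hi
          have : (i:ℝ) + 1 ≤ j := by exact_mod_cast hi
          nlinarith
        · rw [show (2:ℝ)^(k-j) = ∏ _i ∈ Finset.Ico j k, (2:ℝ) by rw [Finset.prod_const, hcard]]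
          apply Finset.prod_le_prod (fun i _ => by norm_num)
          intro i hi
          rw [Finset.mem_Ico] at hi
          have : (j:ℝ) ≤ i := by exact_mod_cast hi.1
          nlinarith
        · positivity
        · exact Finset.prod_nonneg fun i hi => by
            rw [Finset.mem_range] at hi
            have : (i:ℝ) + 1 ≤ j := by exact_mod_cast hi
            nlinarith
    _ = (-1)^(k-j) * ((∏ i ∈ Finset.range j, ((4*j - 2 : ℝ) - 4*i)) *
          ∏ i ∈ Finset.Ico j k, ((4*j - 2 : ℝ) - 4*i)) := by
        rw [mul_comm ((-1:ℝ)^(k-j)) _, mul_assoc, ← hneg]; ring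

lemma Ff_sign {k j : ℕ} (hk : 2 ≤ k) (hj : j ≤ k) :
    2 ≤ (-1:ℝ)^(k-j) * Ff k (4*j - 2) := by
  have h := prod_sign_bound (k := k) hj
  have h4 : (4:ℝ) ≤ (2:ℝ)^k := by
    calc (4:ℝ) = 2^2 := by norm_num
    _ ≤ 2^k := pow_le_pow_right₀ (by norm_num) hk
  rcases Nat.even_or_odd (k - j) with he|he
  · rw [he.neg_one_pow] at h ⊢
    unfold Ff
    linarith
  · rw [he.neg_one_pow] at h ⊢
    unfold Ff
    linarith

lemma Ff_root {k : ℕ} (hk : 2 ≤ k) {j : ℕ} (hj : j < k) :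
    ∃ x, (4*(j:ℝ) - 2) < x ∧ x < 4*(j:ℝ) + 2 ∧ Ff k x = 0 := by
  have h1 := Ff_sign hk (le_of_lt hj)
  have h2 := Ff_sign hk (Nat.succ_le_of_lt hj)
  have hptb : (4*((j+1:ℕ):ℝ) - 2) = 4*(j:ℝ) + 2 := by push_cast; ring
  have hab : (4*(j:ℝ) - 2) ≤ 4*(j:ℝ) + 2 := by linarith
  rcases Nat.even_or_odd (k - j) with he|he
  · -- Ff at left ≥ 2 > 0, at right ≤ -2
    rw [he.neg_one_pow, one_mul] at h1
    have ho : Odd (k - (j+1)) := by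
      rw [Nat.even_iff] at he; rw [Nat.odd_iff]; omega
    rw [ho.neg_one_pow, neg_one_mul, le_neg] at h2
    rw [hptb] at h2
    have := intermediate_value_Ioo' hab (Ff_cont k).continuousOn
      (by constructor <;> linarith : (0:ℝ) ∈ Set.Ioo (Ff k (4*(j:ℝ) + 2)) (Ff k (4*(j:ℝ) - 2)))
    rcases this with ⟨x, hx, hfx⟩
    exact ⟨x, hx.1, hx.2, hfx⟩
  · rw [he.neg_one_pow, neg_one_mul, le_neg] at h1
    have ho : Even (k - (j+1)) := by
      rw [Nat.odd_iff] at he; rw [Nat.even_iff]; omega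
    rw [ho.neg_one_pow, one_mul] at h2
    rw [hptb] at h2
    have := intermediate_value_Ioo hab (Ff_cont k).continuousOn
      (by constructor <;> linarith : (0:ℝ) ∈ Set.Ioo (Ff k (4*(j:ℝ) - 2)) (Ff k (4*(j:ℝ) + 2)))
    rcases this with ⟨x, hx, hfx⟩
    exact ⟨x, hx.1, hx.2, hfx⟩

lemma key_lemma (k : ℕ) (hk : 2 ≤ k) : ∃ r : Fin k → ℝ, StrictMono r ∧
    ∀ a : Fin k → ℤ, a ≠ 0 →
      1 ≤ |∏ i, ∑ j : Fin k, (a j : ℝ) * r i ^ (j:ℕ)| := by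
  have hk0 : 0 < k := by omega
  have hroot : ∀ j : Fin k, ∃ x, (4*((j:ℕ):ℝ) - 2) < x ∧ x < 4*((j:ℕ):ℝ) + 2 ∧ Ff k x = 0 :=
    fun j => Ff_root hk j.2
  choose r hr1 hr2 hr3 using hroot
  have hrmono : StrictMono r := by
    intro i j hij
    have hij' : ((i:ℕ):ℝ) + 1 ≤ ((j:ℕ):ℝ) := by exact_mod_cast hij
    calc r i < 4*((i:ℕ):ℝ) + 2 := hr2 i
      _ ≤ 4*((j:ℕ):ℝ) - 2 := by linarith
      _ < r j := hr1 j
  refine ⟨r, hrmono, ?_⟩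
  intro a ha
  -- setup
  set q : Polynomial ℚ := (fP k).map (Int.castRingHom ℚ) with hq
  have hq_irr : Irreducible q := fPQ_irreducible hk0
  haveI : Fact (Irreducible q) := ⟨hq_irr⟩
  have hq_monic : q.Monic := (fP_monic hk0).map _
  have hq_deg : q.natDegree = k := by
    rw [hq, (fP_monic hk0).natDegree_map, fP_natDegree hk0]
  set K := AdjoinRoot q
  set θ : K := AdjoinRoot.root q with hθ
  haveI : FiniteDimensional ℚ K :=
    PowerBasis.finite (AdjoinRoot.powerBasis (f := q) hq_monic.ne_zero)
  -- roots are roots of q over ℂ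
  have hrootC : ∀ i : Fin k, (Polynomial.aeval ((r i : ℂ))) q = 0 := by
    intro i
    have h0 : ((fP k).map (Int.castRingHom ℝ)).eval (r i) = 0 := by
      rw [Ff_eval]; exact hr3 i
    have : (Polynomial.aeval ((r i : ℂ))) (fP k) = 0 := by
      rw [Polynomial.aeval_def, Polynomial.eval₂_eq_eval_map,
        show (fP k).map (algebraMap ℤ ℂ)
          = ((fP k).map (Int.castRingHom ℝ)).map (Complex.ofRealHom) by
          rw [Polynomial.map_map]; congr 1,
        show ((r i : ℂ)) = Complex.ofRealHom (r i) from rfl, Polynomial.eval_map,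
        Polynomial.eval₂_hom, h0, map_zero]
    rw [hq, show (Int.castRingHom ℚ) = algebraMap ℤ ℚ from rfl,
      Polynomial.aeval_map_algebraMap]
    exact this
  -- embeddings
  set σ : Fin k → (K →ₐ[ℚ] ℂ) := fun i => AdjoinRoot.liftAlgHom q (Algebra.ofId ℚ ℂ) ((r i : ℂ)) (hrootC i) with hσ
  have hσθ : ∀ i, σ i θ = (r i : ℂ) := fun i => AdjoinRoot.liftAlgHom_root _ _ _ _
  have hσinj : Function.Injective σ := by
    intro i j hijeq
    have : (r i : ℂ) = (r j : ℂ) := by rw [← hσθ i, ← hσθ j, hijeq]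
    exact hrmono.injective (by exact_mod_cast this)
  have hσbij : Function.Bijective σ := by
    rw [Fintype.bijective_iff_injective_and_card]
    refine ⟨hσinj, ?_⟩
    rw [Fintype.card_fin, AlgHom.card,
      PowerBasis.finrank (AdjoinRoot.powerBasis (f := q) hq_monic.ne_zero),
      AdjoinRoot.powerBasis_dim, hq_deg]
  -- the element ξ
  set ξ : K := ∑ j : Fin k, algebraMap ℚ K ((a j : ℚ)) * θ ^ (j:ℕ) with hξdef
  have hdim : (AdjoinRoot.powerBasis (f := q) hq_monic.ne_zero).dim = k := by
    rw [AdjoinRoot.powerBasis_dim, hq_deg]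
  have hξ0 : ξ ≠ 0 := by
    intro h0
    set pb := AdjoinRoot.powerBasis (f := q) hq_monic.ne_zero with hpb
    have hsum' : ∑ i : Fin pb.dim, ((a (Fin.cast hdim i) : ℚ)) • pb.basis i = ξ := by
      rw [hξdef]
      refine Fintype.sum_equiv (finCongr hdim) _ _ fun i => ?_
      rw [Algebra.smul_def, pb.basis_eq_pow]
      simp [hpb, AdjoinRoot.powerBasis_gen, hθ]
    have hall := Fintype.linearIndependent_iff.mp pb.basis.linearIndependent
      (fun i : Fin pb.dim => ((a (Fin.cast hdim i) : ℚ))) (hsum'.trans h0)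
    apply ha
    funext j
    have := hall (Fin.cast hdim.symm j)
    simp only [Fin.cast_cast, Fin.cast_eq_self] at this
    exact_mod_cast this
  -- integrality
  have hθroot : Polynomial.aeval θ q = 0 := by
    rw [hθ, Polynomial.aeval_def]
    exact AdjoinRoot.eval₂_root q
  have hθint : IsIntegral ℤ θ := by
    refine ⟨fP k, fP_monic hk0, ?_⟩
    have : Polynomial.aeval θ (fP k) = 0 := by
      rw [show Polynomial.aeval θ (fP k)
          = Polynomial.aeval θ ((fP k).map (algebraMap ℤ ℚ)) from
        (Polynomial.aeval_map_algebraMap ℚ θ (fP k)).symm]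
      exact hθroot
    exact this
  have hint : IsIntegral ℤ ξ := by
    refine IsIntegral.sum _ fun j _ => ?_
    rw [show algebraMap ℚ K ((a j : ℚ)) = algebraMap ℤ K (a j) from
      (IsScalarTower.algebraMap_apply ℤ ℚ K (a j)).symm]
    exact (isIntegral_algebraMap).mul (hθint.pow _)
  have hnormint : IsIntegral ℤ (Algebra.norm ℚ ξ) := Algebra.isIntegral_norm ℚ hint
  obtain ⟨m, hm⟩ := IsIntegrallyClosed.isIntegral_iff.mp hnormint
  have hnorm0 : Algebra.norm ℚ ξ ≠ 0 := Algebra.norm_ne_zero_iff.mpr hξ0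
  have hm0 : m ≠ 0 := by rintro rfl; rw [map_zero] at hm; exact hnorm0 hm.symm
  -- product formula
  have hprod : algebraMap ℚ ℂ (Algebra.norm ℚ ξ)
      = ∏ i : Fin k, ∑ j : Fin k, (a j : ℂ) * (r i : ℂ)^(j:ℕ) := by
    rw [Algebra.norm_eq_prod_embeddings]
    rw [← hσbij.prod_comp fun s => s ξ]
    refine Finset.prod_congr rfl fun i _ => ?_
    rw [hξdef, map_sum]
    refine Finset.sum_congr rfl fun j _ => ?_
    rw [map_mul, map_pow, hσθ, AlgHom.commutes, eq_ratCast (algebraMap ℚ ℂ)]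
    push_cast
    ring
  -- conclude
  have hm' : ((m:ℚ)) = Algebra.norm ℚ ξ := by exact_mod_cast hm
  have hmC : ((m:ℂ)) = ∏ i : Fin k, ∑ j : Fin k, (a j : ℂ) * (r i : ℂ)^(j:ℕ) := by
    rw [← hprod, ← hm', eq_ratCast (algebraMap ℚ ℂ) ((m:ℚ))]
    norm_cast
  have hP : (∏ i, ∑ j : Fin k, (a j : ℝ) * r i ^ (j:ℕ)) = (m:ℝ) := by
    apply Complex.ofReal_inj.mp
    push_cast
    exact hmC.symm
  rw [hP]
  rw [show |((m:ℝ))| = ((|m| : ℤ) : ℝ) by push_cast; rfl]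
  exact_mod_cast Int.one_le_abs hm0

end AuxUnimodular

/-- Existence of a unimodular lattice whose dual has all products of
coordinates bounded away from zero; in particular the dual multiplicative lower bound
holds with a constant function φ ≡ 2/c. -/
theorem exists_unimodular_lattice_dual_product_bounded (d : ℕ) (hd : 1 ≤ d) :
    ∃ A : Matrix (Fin (d+1)) (Fin (d+1)) ℝ, |A.det| = 1 ∧
      ∃ c : ℝ, 0 < c ∧ c ≤ 1 ∧
        ∀ a : Fin (d+1) → ℤ, dualPt A a ≠ 0 →
          c ≤ |∏ i, dualPt A a i| ∧
          c ≤ Hmul (fun i : Fin d => dualPt A a i.castSucc) *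
                |dualPt A a (Fin.last d)| ∧
          Hmul (fun i : Fin d => dualPt A a i.castSucc) * |dualPt A a (Fin.last d)| >
            1 / (2 / c) := by
  set k := d + 1 with hkd
  have hk : 2 ≤ k := by omega
  obtain ⟨r, hrmono, hr⟩ := key_lemma k hk
  set V : Matrix (Fin k) (Fin k) ℝ := Matrix.vandermonde r with hV
  have hVdet : V.det ≠ 0 := by
    rw [hV, Matrix.det_vandermonde]
    refine Finset.prod_ne_zero_iff.mpr fun i _ => Finset.prod_ne_zero_iff.mpr fun j hj => ?_
    rw [Finset.mem_Ioi] at hj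
    exact sub_ne_zero.mpr (ne_of_gt (hrmono hj))
  set s : Fin k → ℝ := fun i => if i = Fin.last d then (V.det)⁻¹ else 1 with hs
  set M : Matrix (Fin k) (Fin k) ℝ := Matrix.diagonal s * V with hM
  have hsprod : ∏ i, s i = (V.det)⁻¹ := by
    rw [hs]
    simp
  have hMdet : M.det = 1 := by
    rw [hM, Matrix.det_mul, Matrix.det_diagonal, hsprod, inv_mul_cancel₀ hVdet]
  have hMTdet : M.transpose.det = 1 := by rw [Matrix.det_transpose, hMdet]
  have hMTunit : IsUnit M.transpose.det := by rw [hMTdet]; exact isUnit_one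
  refine ⟨(M.transpose)⁻¹, ?_, ?_⟩
  · rw [Matrix.det_nonsing_inv, hMTdet]; norm_num
  have hdual : ∀ a : Fin k → ℤ, dualPt (M.transpose)⁻¹ a
      = fun i => s i * ∑ j : Fin k, (a j : ℝ) * r i ^ (j:ℕ) := by
    intro a
    funext i
    rw [dualPt, Matrix.nonsing_inv_nonsing_inv _ hMTunit, Matrix.transpose_transpose]
    rw [hM, Matrix.mulVec, dotProduct]
    rw [Finset.mul_sum]
    refine Finset.sum_congr rfl fun j _ => ?_
    rw [Matrix.mul_apply]
    rw [show ∑ x, Matrix.diagonal s i x * V x j = s i * V i j by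
      rw [Finset.sum_eq_single i (fun b _ hb => by
          rw [Matrix.diagonal_apply_ne' s hb, zero_mul])
        (fun h => absurd (Finset.mem_univ i) h), Matrix.diagonal_apply_eq]]
    rw [hV]
    show s i * (r i ^ (j:ℕ)) * (a j : ℝ) = s i * ((a j : ℝ) * r i ^ (j:ℕ))
    ring
  set c : ℝ := min 1 (|V.det|⁻¹) with hc
  have hVdabs : 0 < |V.det| := abs_pos.mpr hVdet
  have hc0 : 0 < c := lt_min one_pos (inv_pos.mpr hVdabs)
  refine ⟨c, hc0, min_le_left _ _, ?_⟩
  intro a hane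
  have ha : a ≠ 0 := by
    rintro rfl
    apply hane
    rw [hdual 0]
    funext i
    simp
  have hN := hr a ha
  set lam : Fin k → ℝ := dualPt (M.transpose)⁻¹ a with hlam
  have hprodeq : |∏ i, lam i| = |V.det|⁻¹ * |∏ i, ∑ j : Fin k, (a j : ℝ) * r i ^ (j:ℕ)| := by
    rw [hlam, hdual a, Finset.prod_mul_distrib, abs_mul, hsprod, abs_inv]
  have h1 : c ≤ |∏ i, lam i| := by
    rw [hprodeq]
    calc c ≤ |V.det|⁻¹ := min_le_right _ _
      _ ≤ |V.det|⁻¹ * |∏ i, ∑ j : Fin k, (a j : ℝ) * r i ^ (j:ℕ)| :=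
        le_mul_of_one_le_right (by positivity) hN
  have h2 : |∏ i, lam i| ≤ Hmul (fun i : Fin d => lam i.castSucc) * |lam (Fin.last d)| := by
    rw [Finset.abs_prod, Fin.prod_univ_castSucc]
    refine mul_le_mul_of_nonneg_right ?_ (abs_nonneg _)
    exact Finset.prod_le_prod (fun i _ => abs_nonneg _) (fun i _ => le_max_right 1 _)
  refine ⟨h1, h1.trans h2, ?_⟩
  rw [one_div_div]
  calc c / 2 < c := half_lt_self hc0
    _ ≤ _ := h1.trans h2
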